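/- The operators WP − PW^t and W*P − P W̄ are zeroth-order (multiplication by matrix-valued functions, containing no differentiation of the argument). Consequently, setting Q := WP − PW^t − WW^t and Q̂ := W*P − P W̄ − W* W̄, one has the factorizations (P + W)(P − W^t) = −ΔI₈ + Q and (P + W*)(P − W̄) = −ΔI₈ + Q̂, which are Schrödinger-type operators with no first-order terms. Likewise, −P W^t(−κ̄,ᾱ,β) + W(−κ̄,ᾱ,β)P is zeroth-order and (P + W(−κ̄,ᾱ,β))(P − W^t(−κ̄,ᾱ,β)) = −ΔI₈ + Q̃ with Q̃ := −P W^t(−κ̄,ᾱ,β) + W(−κ̄,ᾱ,β)P − W(−κ̄,ᾱ,β)W^t(−κ̄,ᾱ,β) zeroth-order. -/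

import Mathlib

/- Common setup: 3D vector calculus, the Maxwell/Dirac 8×8 operators of
Caro–Marletta–Reyes "Uniqueness for an IBVP for Maxwell equations with local data". -/

noncomputable section

open MeasureTheory Set

abbrev R3 : Type := EuclideanSpace ℝ (Fin 3)
abbrev C3 : Type := Fin 3 → ℂ
abbrev C8 : Type := Fin 8 → ℂ

/-- Partial derivative in the `j`-th coordinate direction. -/
def pd (j : Fin 3) (f : R3 → ℂ) (x : R3) : ℂ :=
  fderiv ℝ f x (EuclideanSpace.single j (1:ℝ))

def divg (u : R3 → C3) (x : R3) : ℂ := ∑ j : Fin 3, pd j (fun y => u y j) x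

def curl (u : R3 → C3) (x : R3) : C3 := fun i =>
  pd (i + 1) (fun y => u y (i + 2)) x - pd (i + 2) (fun y => u y (i + 1)) x

def lapC (f : R3 → ℂ) (x : R3) : ℂ := ∑ j : Fin 3, pd j (fun y => pd j f y) x

def lap8 (U : R3 → C8) (x : R3) : C8 := fun k => lapC (fun y => U y k) x

/-- Complex-bilinear dot product. -/
def dot3 (a b : C3) : ℂ := ∑ i : Fin 3, a i * b i

/-- Complex-bilinear cross product. -/
def crossC (a b : C3) : C3 := fun i => a (i+1) * b (i+2) - a (i+2) * b (i+1)

def toC3 (n : R3) : C3 := fun i => (n i : ℂ)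

def crossR (n : R3) (b : C3) : C3 := crossC (toC3 n) b

/-- Hermitian pairing `(a|b) = ∑ conj (b k) * a k`. -/
def ip8 (a b : C8) : ℂ := ∑ k : Fin 8, (starRingEnd ℂ) (b k) * a k

def norm3 (a : C3) : ℝ := Real.sqrt (∑ i : Fin 3, ‖a i‖^2)
def norm8 (a : C8) : ℝ := Real.sqrt (∑ k : Fin 8, ‖a k‖^2)

def matNorm (A : Matrix (Fin 8) (Fin 8) ℂ) : ℝ :=
  Real.sqrt (∑ i : Fin 8, ∑ j : Fin 8, ‖A i j‖^2)

/-- `D = (1/i)∇`. -/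
def Dof (f : R3 → ℂ) (x : R3) : C3 := fun j => -Complex.I * pd j f x

/-- Assemble a `ℂ⁸` vector from the partition (scalar, 3-vector | scalar, 3-vector). -/
def asm (a : ℂ) (u : C3) (b : ℂ) (w : C3) : C8 := ![a, u 0, u 1, u 2, b, w 0, w 1, w 2]

def pt1 (v : C8) : ℂ := v 0
def vec1 (v : C8) : C3 := fun j => v (Fin.mk (j.val + 1) (by have := j.isLt; omega))
def pt2 (v : C8) : ℂ := v 4
def vec2 (v : C8) : C3 := fun j => v (Fin.mk (j.val + 5) (by have := j.isLt; omega))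

/-- The 8×8 first order operator `P = [[0,0,0,D·],[0,0,D,−D×],[0,D·,0,0],[D,D×,0,0]]`. -/
def Pop (U : R3 → C8) (x : R3) : C8 :=
  asm (-Complex.I * divg (fun y => vec2 (U y)) x)
      (fun i => -Complex.I * pd i (fun y => pt2 (U y)) x
                + Complex.I * curl (fun y => vec2 (U y)) x i)
      (-Complex.I * divg (fun y => vec1 (U y)) x)
      (fun i => -Complex.I * pd i (fun y => pt1 (U y)) x
                - Complex.I * curl (fun y => vec1 (U y)) x i)

/-- The zeroth-order matrix
`W(κ,α,β) = κI₈ + ½[[0,0,0,Dα·],[0,0,Dα,Dα×],[0,Dβ·,0,0],[Dβ,−Dβ×,0,0]]`. -/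
def Wmat (κ α β : R3 → ℂ) (x : R3) : Matrix (Fin 8) (Fin 8) ℂ :=
  let a := Dof α x
  let b := Dof β x
  let k := κ x
  Matrix.of
  ![![k, 0, 0, 0, 0, a 0 / 2, a 1 / 2, a 2 / 2],
    ![0, k, 0, 0, a 0 / 2, 0, -(a 2) / 2, a 1 / 2],
    ![0, 0, k, 0, a 1 / 2, a 2 / 2, 0, -(a 0) / 2],
    ![0, 0, 0, k, a 2 / 2, -(a 1) / 2, a 0 / 2, 0],
    ![0, b 0 / 2, b 1 / 2, b 2 / 2, k, 0, 0, 0],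
    ![b 0 / 2, 0, b 2 / 2, -(b 1) / 2, 0, k, 0, 0],
    ![b 1 / 2, -(b 2) / 2, 0, b 0 / 2, 0, 0, k, 0],
    ![b 2 / 2, b 1 / 2, -(b 0) / 2, 0, 0, 0, 0, k]]

def alphaOf (γ : R3 → ℂ) : R3 → ℂ := fun x => Complex.log (γ x)
def betaOf (μ : R3 → ℝ) : R3 → ℂ := fun x => (Real.log (μ x) : ℂ)
def kappaOf (ω : ℝ) (μ : R3 → ℝ) (γ : R3 → ℂ) : R3 → ℂ :=
  fun x => (ω : ℂ) * (Real.sqrt (μ x) : ℂ) * (γ x) ^ ((1 : ℂ)/2)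

/-- `W` built from the coefficients `μ`, `γ` at frequency `ω`. -/
def WmatC (ω : ℝ) (μ : R3 → ℝ) (γ : R3 → ℂ) : R3 → Matrix (Fin 8) (Fin 8) ℂ :=
  fun x => Wmat (kappaOf ω μ γ) (alphaOf γ) (betaOf μ) x

/-- `W(−κ̄, ᾱ, β)`. -/
def WmatTil (ω : ℝ) (μ : R3 → ℝ) (γ : R3 → ℂ) : R3 → Matrix (Fin 8) (Fin 8) ℂ :=
  fun x => Wmat (fun y => -(starRingEnd ℂ) (kappaOf ω μ γ y))
                (fun y => (starRingEnd ℂ) (alphaOf γ y)) (betaOf μ) x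

/-- The augmented-system potential `V`. -/
def Vmat (ω : ℝ) (μ : R3 → ℝ) (γ : R3 → ℂ) (x : R3) : Matrix (Fin 8) (Fin 8) ℂ :=
  let a := Dof (alphaOf γ) x
  let b := Dof (betaOf μ) x
  let w : ℂ := (ω : ℂ) * (μ x : ℂ)
  let g : ℂ := (ω : ℂ) * γ x
  Matrix.of
  ![![w, 0, 0, 0, 0, a 0, a 1, a 2],
    ![0, w, 0, 0, a 0, 0, 0, 0],
    ![0, 0, w, 0, a 1, 0, 0, 0],
    ![0, 0, 0, w, a 2, 0, 0, 0],
    ![0, b 0, b 1, b 2, g, 0, 0, 0],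
    ![b 0, 0, 0, 0, 0, g, 0, 0],
    ![b 1, 0, 0, 0, 0, 0, g, 0],
    ![b 2, 0, 0, 0, 0, 0, 0, g]]

/-- The boundary matrix `P_N`. -/
def PNmat (n : R3) : Matrix (Fin 8) (Fin 8) ℂ :=
  let ν := toC3 n
  let c : ℂ := -Complex.I
  Matrix.of
  ![![0, 0, 0, 0, 0, c * ν 0, c * ν 1, c * ν 2],
    ![0, 0, 0, 0, c * ν 0, 0, c * ν 2, -(c * ν 1)],
    ![0, 0, 0, 0, c * ν 1, -(c * ν 2), 0, c * ν 0],
    ![0, 0, 0, 0, c * ν 2, c * ν 1, -(c * ν 0), 0],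
    ![0, c * ν 0, c * ν 1, c * ν 2, 0, 0, 0, 0],
    ![c * ν 0, 0, -(c * ν 2), c * ν 1, 0, 0, 0, 0],
    ![c * ν 1, c * ν 2, 0, -(c * ν 0), 0, 0, 0, 0],
    ![c * ν 2, -(c * ν 1), c * ν 0, 0, 0, 0, 0, 0]]

/-- The operator `Q = WP − PWᵗ − WWᵗ` applied to a field. -/
def Qapp (Wf : R3 → Matrix (Fin 8) (Fin 8) ℂ) (Z : R3 → C8) (x : R3) : C8 :=
  (Wf x).mulVec (Pop Z x) - Pop (fun y => ((Wf y).transpose).mulVec (Z y)) x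
    - (Wf x).mulVec (((Wf x).transpose).mulVec (Z x))

/-- The operator `Q̂ = W*P − PW̄ − W*W̄` applied to a field. -/
def QhatApp (Wf : R3 → Matrix (Fin 8) (Fin 8) ℂ) (Z : R3 → C8) (x : R3) : C8 :=
  ((Wf x).conjTranspose).mulVec (Pop Z x)
    - Pop (fun y => ((Wf y).map (starRingEnd ℂ)).mulVec (Z y)) x
    - ((Wf x).conjTranspose).mulVec (((Wf x).map (starRingEnd ℂ)).mulVec (Z x))

/-- The operator `Q̃ = W(−κ̄,ᾱ,β)P − PWᵗ(−κ̄,ᾱ,β) − W(−κ̄,ᾱ,β)Wᵗ(−κ̄,ᾱ,β)` applied. -/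
def QtildeApp (ω : ℝ) (μ : R3 → ℝ) (γ : R3 → ℂ) : (R3 → C8) → R3 → C8 :=
  Qapp (WmatTil ω μ γ)

def sqrtμC (μ : R3 → ℝ) (x : R3) : ℂ := (Real.sqrt (μ x) : ℂ)
def sqrtγC (γ : R3 → ℂ) (x : R3) : ℂ := (γ x) ^ ((1 : ℂ)/2)

/-- The rescaled field `Y = (0, μ^{1/2}Hᵗ | 0, γ^{1/2}Eᵗ)ᵗ`. -/
def YofEH (μ : R3 → ℝ) (γ : R3 → ℂ) (E H : R3 → C3) (x : R3) : C8 :=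
  asm 0 (fun i => sqrtμC μ x * H x i) 0 (fun i => sqrtγC γ x * E x i)

/-- The time-harmonic Maxwell equations on Ω. -/
def Maxwell (ω : ℝ) (μ : R3 → ℝ) (γ : R3 → ℂ) (E H : R3 → C3) (Ω : Set R3) : Prop :=
  ∀ x ∈ Ω, (∀ i, curl H x i + Complex.I * (ω : ℂ) * γ x * E x i = 0) ∧
           (∀ i, curl E x i - Complex.I * (ω : ℂ) * (μ x : ℂ) * H x i = 0)

/-- Membership in `H(Ω;curl)` (classical-derivative rendering). -/
def MemHcurl (u : R3 → C3) (Ω : Set R3) : Prop :=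
  (∀ x ∈ Ω, DifferentiableAt ℝ u x) ∧ MemLp u 2 (volume.restrict Ω) ∧
    MemLp (fun x => curl u x) 2 (volume.restrict Ω)

/-- Membership in `H¹(Ω;ℂ⁸)`. -/
def MemH1C8 (U : R3 → C8) (Ω : Set R3) : Prop :=
  (∀ x ∈ Ω, DifferentiableAt ℝ U x) ∧ MemLp U 2 (volume.restrict Ω) ∧
    MemLp (fun x => fderiv ℝ U x) 2 (volume.restrict Ω)

/-- Membership in `H¹(Ω;ℂ)`. -/
def MemH1C (f : R3 → ℂ) (Ω : Set R3) : Prop :=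
  (∀ x ∈ Ω, DifferentiableAt ℝ f x) ∧ MemLp f 2 (volume.restrict Ω) ∧
    MemLp (fun x => fderiv ℝ f x) 2 (volume.restrict Ω)

/-- Membership in `H²(Ω;ℂ⁸)`. -/
def MemH2C8 (U : R3 → C8) (Ω : Set R3) : Prop :=
  ContDiffOn ℝ 2 U Ω ∧ MemLp U 2 (volume.restrict Ω) ∧
    MemLp (fun x => fderiv ℝ U x) 2 (volume.restrict Ω) ∧
    MemLp (fun x => fderiv ℝ (fderiv ℝ U) x) 2 (volume.restrict Ω)

/-- Admissible pair of coefficients (Definition 1.4):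
`μ, γ ∈ C^{1,1} ∩ W^{2,∞}`, `Re γ ≥ M⁻¹`, `μ ≥ M⁻¹`, with `W^{2,∞}`-size controlled by `M`. -/
structure Admissible (Ω : Set R3) (M : ℝ) (μ : R3 → ℝ) (γ : R3 → ℂ) : Prop where
  hM : 0 < M
  regμ : ContDiffOn ℝ 1 μ (closure Ω)
  regγ : ContDiffOn ℝ 1 γ (closure Ω)
  lipdμ : LipschitzOnWith (Real.toNNReal M) (fderiv ℝ μ) (closure Ω)
  lipdγ : LipschitzOnWith (Real.toNNReal M) (fderiv ℝ γ) (closure Ω)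
  lowγ : ∀ x ∈ Ω, M⁻¹ ≤ (γ x).re
  lowμ : ∀ x ∈ Ω, M⁻¹ ≤ μ x
  bnd : ∀ x ∈ Ω, ‖γ x‖ + ‖fderiv ℝ γ x‖ + |μ x| + ‖fderiv ℝ μ x‖ ≤ M

/-- Definition 1.1: Ω is a nonempty bounded domain and Γ is a proper nonempty
relatively open subset of ∂Ω (the accessible part of the boundary). -/
structure GoodDomain (Ω Γ : Set R3) : Prop where
  open_Ω : IsOpen Ω
  nonempty_Ω : Ω.Nonempty
  bounded_Ω : Bornology.IsBounded Ω
  conn_Ω : IsConnected Ω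
  Γ_sub : Γ ⊆ frontier Ω
  Γ_ne : Γ.Nonempty
  Γ_rel_open : ∃ V : Set R3, IsOpen V ∧ Γ = frontier Ω ∩ V
  Γ_proper : Γ ≠ frontier Ω

/-- The inaccessible part of the boundary. -/
def Γc (Ω Γ : Set R3) : Set R3 := frontier Ω \ closure Γ

/-- The Cauchy data set restricted to Γ (Definition 1.2). -/
def CauchyData (Ω Γ : Set R3) (N : R3 → R3) (ω : ℝ) (μ : R3 → ℝ) (γ : R3 → ℂ) :
    Set ((R3 → C3) × (R3 → C3)) :=
  { TS | ∃ E H : R3 → C3, MemHcurl E Ω ∧ MemHcurl H Ω ∧ Maxwell ω μ γ E H Ω ∧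
      (∀ x ∈ frontier Ω, crossR (N x) (E x) = TS.1 x) ∧
      (∀ x ∈ Γc Ω Γ, TS.1 x = 0) ∧
      (∀ x ∈ Γ, crossR (N x) (H x) = TS.2 x) }

/-- `e^{iζ·x}`. -/
def cgoExp (ζ : C3) (x : R3) : ℂ := Complex.exp (Complex.I * dot3 ζ (toC3 x))

def q1of (ω : ℝ) (μ : R3 → ℝ) (γ : R3 → ℂ) (x : R3) : ℂ :=
  -(1/2) * lapC (betaOf μ) x - (kappaOf ω μ γ x)^2
    - (1/4) * dot3 (Dof (betaOf μ) x) (Dof (betaOf μ) x)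

def q2of (ω : ℝ) (μ : R3 → ℝ) (γ : R3 → ℂ) (x : R3) : ℂ :=
  -(1/2) * lapC (alphaOf γ) x - (kappaOf ω μ γ x)^2
    - (1/4) * dot3 (Dof (alphaOf γ) x) (Dof (alphaOf γ) x)

/-- The second-order Maxwell operator `L U = ∇×(μ⁻¹∇×U) − ω²γU`. -/
def LopA (ω : ℝ) (μ : R3 → ℝ) (γ : R3 → ℂ) (U : R3 → C3) (x : R3) : C3 := fun i =>
  curl (fun y => fun j => ((μ y)⁻¹ : ℂ) * curl U y j) x i - (ω : ℂ)^2 * γ x * U x i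

/-- `U ∈ H(curl)` with `∇×∇×U ∈ L²`. -/
def MemCurlCurl (U : R3 → C3) (G : Set R3) : Prop :=
  MemHcurl U G ∧ (∀ x ∈ G, DifferentiableAt ℝ (fun y => curl U y) x) ∧
    MemLp (fun x => curl (fun y => curl U y) x) 2 (volume.restrict G)

/-- H(curl) graph norm. -/
def HcurlNorm (v : R3 → C3) (Ω : Set R3) : ℝ :=
  Real.sqrt ((∫ x in Ω, (norm3 (v x))^2) + ∫ x in Ω, (norm3 (curl v x))^2)

def H1Norm (f : R3 → ℂ) (Ω : Set R3) : ℝ :=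
  Real.sqrt ((∫ x in Ω, ‖f x‖^2) + ∫ x in Ω, ‖fderiv ℝ f x‖^2)

/-- The `TH(Γ)` norm: infimum of the `H(curl)` graph norms over all fields whose
tangential trace agrees with `u` on `Γ`. -/
def THGammaNorm (Ω Γ : Set R3) (N : R3 → R3) (u : R3 → C3) : ℝ :=
  sInf { r | ∃ v : R3 → C3, MemHcurl v Ω ∧ (∀ x ∈ Γ, crossR (N x) (v x) = u x) ∧
    r = HcurlNorm v Ω }

/-- The `TH₀(Γ)` (= `TH(∂Ω)`) norm. -/
def TH0Norm (Ω : Set R3) (N : R3 → R3) (u : R3 → C3) : ℝ :=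
  sInf { r | ∃ v : R3 → C3, MemHcurl v Ω ∧ (∀ x ∈ frontier Ω, crossR (N x) (v x) = u x) ∧
    r = HcurlNorm v Ω }

/-- The `H^{1/2}(Γ)` norm (via the trace of `H¹(Ω)`). -/
def H12GammaNorm (Ω Γ : Set R3) (f : R3 → ℂ) : ℝ :=
  sInf { r | ∃ v : R3 → ℂ, MemH1C v Ω ∧ (∀ x ∈ Γ, v x = f x) ∧ r = H1Norm v Ω }

/-- The `H^{1/2}₀(Γ)` (= `H^{1/2}(∂Ω)`) norm. -/
def H120Norm (Ω : Set R3) (f : R3 → ℂ) : ℝ :=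
  sInf { r | ∃ v : R3 → ℂ, MemH1C v Ω ∧ (∀ x ∈ frontier Ω, v x = f x) ∧ r = H1Norm v Ω }

/-- The `C^{0,1}` norm on a set. -/
def C01Norm (s : Set R3) (f : R3 → ℂ) : ℝ :=
  sInf { r | 0 ≤ r ∧ (∀ x ∈ s, ‖f x‖ ≤ r) ∧ LipschitzOnWith (Real.toNNReal r) f s }


section Test
open Complex
def ee (j : Fin 3) : C3 := fun i => if i = j then 1 else 0
def Psym (v : C3) : Matrix (Fin 8) (Fin 8) ℂ :=
  let c : ℂ := -Complex.I
  Matrix.of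
  ![![0, 0, 0, 0, 0, c * v 0, c * v 1, c * v 2],
    ![0, 0, 0, 0, c * v 0, 0, c * v 2, -(c * v 1)],
    ![0, 0, 0, 0, c * v 1, -(c * v 2), 0, c * v 0],
    ![0, 0, 0, 0, c * v 2, c * v 1, -(c * v 0), 0],
    ![0, c * v 0, c * v 1, c * v 2, 0, 0, 0, 0],
    ![c * v 0, 0, -(c * v 2), c * v 1, 0, 0, 0, 0],
    ![c * v 1, c * v 2, 0, -(c * v 0), 0, 0, 0, 0],
    ![c * v 2, -(c * v 1), c * v 0, 0, 0, 0, 0, 0]]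
def pdv (j : Fin 3) (V : R3 → C8) (x : R3) : C8 := fun m => pd j (fun y => V y m) x
variable {α : Type*}
lemma v8_0 (a0 a1 a2 a3 a4 a5 a6 a7 : α) : ![a0,a1,a2,a3,a4,a5,a6,a7] 0 = a0 := rfl
lemma v8_1 (a0 a1 a2 a3 a4 a5 a6 a7 : α) : ![a0,a1,a2,a3,a4,a5,a6,a7] 1 = a1 := rfl
lemma v8_2 (a0 a1 a2 a3 a4 a5 a6 a7 : α) : ![a0,a1,a2,a3,a4,a5,a6,a7] 2 = a2 := rfl
lemma v8_3 (a0 a1 a2 a3 a4 a5 a6 a7 : α) : ![a0,a1,a2,a3,a4,a5,a6,a7] 3 = a3 := rfl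
lemma v8_4 (a0 a1 a2 a3 a4 a5 a6 a7 : α) : ![a0,a1,a2,a3,a4,a5,a6,a7] 4 = a4 := rfl
lemma v8_5 (a0 a1 a2 a3 a4 a5 a6 a7 : α) : ![a0,a1,a2,a3,a4,a5,a6,a7] 5 = a5 := rfl
lemma v8_6 (a0 a1 a2 a3 a4 a5 a6 a7 : α) : ![a0,a1,a2,a3,a4,a5,a6,a7] 6 = a6 := rfl
lemma v8_7 (a0 a1 a2 a3 a4 a5 a6 a7 : α) : ![a0,a1,a2,a3,a4,a5,a6,a7] 7 = a7 := rfl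
lemma v3_0 (a b c : α) : ![a,b,c] 0 = a := rfl
lemma v3_1 (a b c : α) : ![a,b,c] 1 = b := rfl
lemma v3_2 (a b c : α) : ![a,b,c] 2 = c := rfl
lemma vec1_0 (v : C8) : vec1 v 0 = v 1 := rfl
lemma vec1_1 (v : C8) : vec1 v 1 = v 2 := rfl
lemma vec1_2 (v : C8) : vec1 v 2 = v 3 := rfl
lemma vec2_0 (v : C8) : vec2 v 0 = v 5 := rfl
lemma vec2_1 (v : C8) : vec2 v 1 = v 6 := rfl
lemma vec2_2 (v : C8) : vec2 v 2 = v 7 := rfl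
lemma mk8_0 (h : 0 < 8) : (⟨0, h⟩ : Fin 8) = 0 := rfl
lemma mk8_1 (h : 1 < 8) : (⟨1, h⟩ : Fin 8) = 1 := rfl
lemma mk8_2 (h : 2 < 8) : (⟨2, h⟩ : Fin 8) = 2 := rfl
lemma mk8_3 (h : 3 < 8) : (⟨3, h⟩ : Fin 8) = 3 := rfl
lemma mk8_4 (h : 4 < 8) : (⟨4, h⟩ : Fin 8) = 4 := rfl
lemma mk8_5 (h : 5 < 8) : (⟨5, h⟩ : Fin 8) = 5 := rfl
lemma mk8_6 (h : 6 < 8) : (⟨6, h⟩ : Fin 8) = 6 := rfl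
lemma mk8_7 (h : 7 < 8) : (⟨7, h⟩ : Fin 8) = 7 := rfl
lemma mk3_0 (h : 0 < 3) : (⟨0, h⟩ : Fin 3) = 0 := rfl
lemma mk3_1 (h : 1 < 3) : (⟨1, h⟩ : Fin 3) = 1 := rfl
lemma mk3_2 (h : 2 < 3) : (⟨2, h⟩ : Fin 3) = 2 := rfl
lemma if01 (a b : α) : (if (0:Fin 3) = 1 then a else b) = b := rfl
lemma if02 (a b : α) : (if (0:Fin 3) = 2 then a else b) = b := rfl
lemma if10 (a b : α) : (if (1:Fin 3) = 0 then a else b) = b := rfl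
lemma if12 (a b : α) : (if (1:Fin 3) = 2 then a else b) = b := rfl
lemma if20 (a b : α) : (if (2:Fin 3) = 0 then a else b) = b := rfl
lemma if21 (a b : α) : (if (2:Fin 3) = 1 then a else b) = b := rfl
lemma if00 (a b : α) : (if (0:Fin 3) = 0 then a else b) = a := rfl
lemma if11 (a b : α) : (if (1:Fin 3) = 1 then a else b) = a := rfl
lemma if22 (a b : α) : (if (2:Fin 3) = 2 then a else b) = a := rfl
lemma f3_1 : (0 + 1 : Fin 3) = 1 := rfl
lemma f3_2 : (0 + 2 : Fin 3) = 2 := rfl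
lemma f3_3 : (1 + 1 : Fin 3) = 2 := rfl
lemma f3_4 : (1 + 2 : Fin 3) = 0 := rfl
lemma f3_5 : (2 + 1 : Fin 3) = 0 := rfl
lemma f3_6 : (2 + 2 : Fin 3) = 1 := rfl

set_option maxHeartbeats 2000000 in
lemma Pop_symbolize (V : R3 → C8) (x : R3) :
    Pop V x = ∑ j : Fin 3, (Psym (ee j)).mulVec (pdv j V x) := by
  funext m
  fin_cases m <;>
  · simp only [Fin.sum_univ_three, Pi.add_apply, Matrix.mulVec, dotProduct,
      Fin.sum_univ_eight, Psym, ee, Matrix.of_apply, pdv, Pop, asm, divg, curl,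
      pt1, pt2, vec1_0, vec1_1, vec1_2, vec2_0, vec2_1, vec2_2,
      f3_1, f3_2, f3_3, f3_4, f3_5, f3_6, Fin.isValue,
      v8_0, v8_1, v8_2, v8_3, v8_4, v8_5, v8_6, v8_7, v3_0, v3_1, v3_2,
      if01, if02, if10, if12, if20, if21, if00, if11, if22,
      mk8_0, mk8_1, mk8_2, mk8_3, mk8_4, mk8_5, mk8_6, mk8_7, if_true,
      mul_one, mul_zero, zero_mul, add_zero, zero_add, neg_neg, neg_zero]
    ring
end Test
def WmatG (k : ℂ) (a b : C3) : Matrix (Fin 8) (Fin 8) ℂ :=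
  Matrix.of
  ![![k, 0, 0, 0, 0, a 0 / 2, a 1 / 2, a 2 / 2],
    ![0, k, 0, 0, a 0 / 2, 0, -(a 2) / 2, a 1 / 2],
    ![0, 0, k, 0, a 1 / 2, a 2 / 2, 0, -(a 0) / 2],
    ![0, 0, 0, k, a 2 / 2, -(a 1) / 2, a 0 / 2, 0],
    ![0, b 0 / 2, b 1 / 2, b 2 / 2, k, 0, 0, 0],
    ![b 0 / 2, 0, b 2 / 2, -(b 1) / 2, 0, k, 0, 0],
    ![b 1 / 2, -(b 2) / 2, 0, b 0 / 2, 0, 0, k, 0],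
    ![b 2 / 2, b 1 / 2, -(b 0) / 2, 0, 0, 0, 0, k]]

lemma WmatC_eq (ω : ℝ) (μ : R3 → ℝ) (γ : R3 → ℂ) (y : R3) :
    WmatC ω μ γ y = WmatG (kappaOf ω μ γ y) (Dof (alphaOf γ) y) (Dof (betaOf μ) y) := rfl

lemma WmatTil_eq (ω : ℝ) (μ : R3 → ℝ) (γ : R3 → ℂ) (y : R3) :
    WmatTil ω μ γ y = WmatG (-(starRingEnd ℂ) (kappaOf ω μ γ y))
      (Dof (fun z => (starRingEnd ℂ) (alphaOf γ z)) y) (Dof (betaOf μ) y) := rfl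

lemma WmatG_transpose (k : ℂ) (a b : C3) :
    (WmatG k a b).transpose = WmatG k b a := by
  funext i j
  fin_cases i <;> fin_cases j <;>
    simp only [Matrix.transpose_apply, WmatG, Matrix.of_apply,
      mk8_0, mk8_1, mk8_2, mk8_3, mk8_4, mk8_5, mk8_6, mk8_7,
      v8_0, v8_1, v8_2, v8_3, v8_4, v8_5, v8_6, v8_7]

lemma WmatG_conjT (k : ℂ) (a b : C3) :
    (WmatG k a b).conjTranspose
      = WmatG ((starRingEnd ℂ) k) (fun i => (starRingEnd ℂ) (b i))
          (fun i => (starRingEnd ℂ) (a i)) := by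
  funext i j
  fin_cases i <;> fin_cases j <;>
    simp only [Matrix.conjTranspose_apply, WmatG, Matrix.of_apply,
      mk8_0, mk8_1, mk8_2, mk8_3, mk8_4, mk8_5, mk8_6, mk8_7,
      v8_0, v8_1, v8_2, v8_3, v8_4, v8_5, v8_6, v8_7, map_div₀, map_zero, map_neg,
      Complex.conj_ofNat, star_zero, RingHom.coe_coe, Complex.star_def]

lemma WmatG_map (k : ℂ) (a b : C3) :
    (WmatG k a b).map (starRingEnd ℂ)
      = WmatG ((starRingEnd ℂ) k) (fun i => (starRingEnd ℂ) (a i))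
          (fun i => (starRingEnd ℂ) (b i)) := by
  funext i j
  fin_cases i <;> fin_cases j <;>
    simp only [Matrix.map_apply, WmatG, Matrix.of_apply,
      mk8_0, mk8_1, mk8_2, mk8_3, mk8_4, mk8_5, mk8_6, mk8_7,
      v8_0, v8_1, v8_2, v8_3, v8_4, v8_5, v8_6, v8_7, map_div₀, map_zero, map_neg,
      Complex.conj_ofNat, star_zero, RingHom.coe_coe, Complex.star_def]
set_option maxHeartbeats 1600000 in
lemma symbol_rel (k : ℂ) (a b v : C3) :
    WmatG k a b * Psym v = Psym v * WmatG k b a := by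
  funext i j
  fin_cases i <;> fin_cases j <;>
  · simp only [Matrix.mul_apply, Fin.sum_univ_eight, WmatG, Psym, Matrix.of_apply,
      mk8_0, mk8_1, mk8_2, mk8_3, mk8_4, mk8_5, mk8_6, mk8_7,
      v8_0, v8_1, v8_2, v8_3, v8_4, v8_5, v8_6, v8_7, v3_0, v3_1, v3_2]
    ring
set_option maxHeartbeats 1600000 in
lemma PP_diag (j : Fin 3) : Psym (ee j) * Psym (ee j) = -1 := by
  fin_cases j <;>
  · funext i l
    fin_cases i <;> fin_cases l <;>
    · simp only [Matrix.mul_apply, Fin.sum_univ_eight, Psym, ee, Matrix.of_apply,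
        mk8_0, mk8_1, mk8_2, mk8_3, mk8_4, mk8_5, mk8_6, mk8_7, mk3_0, mk3_1, mk3_2,
        v8_0, v8_1, v8_2, v8_3, v8_4, v8_5, v8_6, v8_7, v3_0, v3_1, v3_2,
        if01, if02, if10, if12, if20, if21, if00, if11, if22, if_true,
        Matrix.neg_apply, Matrix.one_apply]
      norm_num [Complex.I_mul_I, Fin.ext_iff] <;> decide

set_option maxHeartbeats 1600000 in
lemma PP_anti (j j' : Fin 3) (h : j ≠ j') :
    Psym (ee j) * Psym (ee j') = -(Psym (ee j') * Psym (ee j)) := by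
  fin_cases j <;> fin_cases j' <;> first
  | exact absurd rfl h
  | · funext i l
      fin_cases i <;> fin_cases l <;>
      · simp only [Matrix.mul_apply, Fin.sum_univ_eight, Psym, ee, Matrix.of_apply,
          mk8_0, mk8_1, mk8_2, mk8_3, mk8_4, mk8_5, mk8_6, mk8_7, mk3_0, mk3_1, mk3_2,
          v8_0, v8_1, v8_2, v8_3, v8_4, v8_5, v8_6, v8_7, v3_0, v3_1, v3_2,
          if01, if02, if10, if12, if20, if21, if00, if11, if22, if_true,
          Matrix.neg_apply]
        ring
section PD
open Complex

lemma pd_sub {f g : R3 → ℂ} {x : R3} (hf : DifferentiableAt ℝ f x)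
    (hg : DifferentiableAt ℝ g x) (j : Fin 3) :
    pd j (fun y => f y - g y) x = pd j f x - pd j g x := by
  unfold pd; rw [fderiv_fun_sub hf hg]; rfl

lemma pd_const (c : ℂ) (j : Fin 3) (x : R3) : pd j (fun _ => c) x = 0 := by
  unfold pd; rw [fderiv_fun_const]; rfl

lemma pd_neg (f : R3 → ℂ) (j : Fin 3) (x : R3) :
    pd j (fun y => -f y) x = -pd j f x := by
  unfold pd; rw [fderiv_fun_neg]; rfl

lemma pd_mul {f g : R3 → ℂ} {x : R3} (hf : DifferentiableAt ℝ f x)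
    (hg : DifferentiableAt ℝ g x) (j : Fin 3) :
    pd j (fun y => f y * g y) x = pd j f x * g x + f x * pd j g x := by
  unfold pd
  rw [fderiv_fun_mul hf hg]
  simp only [ContinuousLinearMap.add_apply, ContinuousLinearMap.smul_apply, smul_eq_mul]
  ring

lemma pd_const_mul {g : R3 → ℂ} {x : R3} (hg : DifferentiableAt ℝ g x) (c : ℂ) (j : Fin 3) :
    pd j (fun y => c * g y) x = c * pd j g x := by
  unfold pd; rw [fderiv_const_mul hg]; rfl

lemma pd_div_const {f : R3 → ℂ} {x : R3} (hf : DifferentiableAt ℝ f x) (c : ℂ) (j : Fin 3) :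
    pd j (fun y => f y / c) x = pd j f x / c := by
  rw [show (fun y => f y / c) = fun y => (1/c) * f y from funext fun y => by ring,
    pd_const_mul hf]
  rw [one_div, mul_comm, div_eq_mul_inv]

lemma pd_neg_div_const {f : R3 → ℂ} {x : R3} (hf : DifferentiableAt ℝ f x) (c : ℂ) (j : Fin 3) :
    pd j (fun y => -f y / c) x = -pd j f x / c := by
  rw [show (fun y => -f y / c) = fun y => -(f y / c) from funext fun y => by ring,
    pd_neg (fun y => f y / c), pd_div_const hf, neg_div]

lemma pd_conj (f : R3 → ℂ) (j : Fin 3) (x : R3) :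
    pd j (fun y => (starRingEnd ℂ) (f y)) x = (starRingEnd ℂ) (pd j f x) := by
  unfold pd
  have : (fun y => (starRingEnd ℂ) (f y)) = ⇑Complex.conjCLE ∘ f := by
    funext y; simp
  rw [this, Complex.conjCLE.comp_fderiv]
  simp

lemma pd_sum {ι : Type*} (s : Finset ι) (f : ι → R3 → ℂ) {x : R3}
    (hf : ∀ i ∈ s, DifferentiableAt ℝ (f i) x) (j : Fin 3) :
    pd j (fun y => ∑ i ∈ s, f i y) x = ∑ i ∈ s, pd j (f i) x := by
  unfold pd; rw [fderiv_fun_sum hf]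
  simp [ContinuousLinearMap.sum_apply]

/-- Schwarz symmetry of second partials. -/
lemma pd_comm {f : R3 → ℂ} {x : R3} (hf : ContDiffAt ℝ 2 f x) (j k : Fin 3) :
    pd j (fun y => pd k f y) x = pd k (fun y => pd j f y) x := by
  have hd : DifferentiableAt ℝ (fderiv ℝ f) x :=
    (hf.fderiv_right (m := 1) (by norm_num)).differentiableAt one_ne_zero
  have key : ∀ v w : R3,
      fderiv ℝ (fun y => fderiv ℝ f y w) x v = fderiv ℝ (fderiv ℝ f) x v w := by
    intro v w
    rw [fderiv_clm_apply hd (differentiableAt_const w)]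
    simp
  unfold pd
  rw [key, key]
  exact (hf.isSymmSndFDerivAt (by simp [minSmoothness_of_isRCLikeNormedField])) _ _

/-- Differentiability of first partials of a `C²` function. -/
lemma pd_diff {f : R3 → ℂ} {x : R3} (hf : ContDiffAt ℝ 2 f x) (k : Fin 3) :
    DifferentiableAt ℝ (fun y => pd k f y) x := by
  have hd : DifferentiableAt ℝ (fderiv ℝ f) x :=
    (hf.fderiv_right (m := 1) (by norm_num)).differentiableAt one_ne_zero
  exact hd.clm_apply (differentiableAt_const _)

end PD
section OPS
open Complex

lemma sum_mulVec {ι : Type*} (s : Finset ι) (M : ι → Matrix (Fin 8) (Fin 8) ℂ) (v : C8) :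
    (∑ i ∈ s, M i).mulVec v = ∑ i ∈ s, (M i).mulVec v := by
  funext m
  simp [Matrix.mulVec, dotProduct, Matrix.sum_apply, Finset.sum_mul]
  rw [Finset.sum_comm]

lemma mulVec_eq_sum (M : Matrix (Fin 8) (Fin 8) ℂ) (v : C8) (m : Fin 8) :
    M.mulVec v m = ∑ l : Fin 8, M m l * v l := rfl

/-- Leibniz rule for `pdv` of a matrix-vector product. -/
lemma pdv_mulVec (M : R3 → Matrix (Fin 8) (Fin 8) ℂ) (U : R3 → C8) (x : R3)
    (hM : ∀ m l, DifferentiableAt ℝ (fun y => M y m l) x)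
    (hU : ∀ l, DifferentiableAt ℝ (fun y => U y l) x) (j : Fin 3) :
    pdv j (fun y => (M y).mulVec (U y)) x
      = (Matrix.of fun m l => pd j (fun y => M y m l) x).mulVec (U x)
        + (M x).mulVec (pdv j U x) := by
  funext m
  have h1 : (fun y => (M y).mulVec (U y) m) = fun y => ∑ l : Fin 8, M y m l * U y l := rfl
  simp only [pdv, h1, Pi.add_apply]
  rw [pd_sum _ (fun l y => M y m l * U y l) (fun l _ => (hM m l).mul (hU l))]
  rw [Finset.sum_congr rfl (fun l _ => pd_mul (hM m l) (hU l) j), Finset.sum_add_distrib]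
  rfl

lemma pdv_mulVecConst (C : Matrix (Fin 8) (Fin 8) ℂ) (V : R3 → C8) (x : R3)
    (hV : ∀ l, DifferentiableAt ℝ (fun y => V y l) x) (j : Fin 3) :
    pdv j (fun y => C.mulVec (V y)) x = C.mulVec (pdv j V x) := by
  funext m
  have h1 : (fun y => C.mulVec (V y) m) = fun y => ∑ l : Fin 8, C m l * V y l := rfl
  simp only [pdv, h1]
  rw [pd_sum _ _ (fun l _ => (hV l).const_mul _)]
  rw [Finset.sum_congr rfl (fun l _ => pd_const_mul (hV l) _ j)]
  rfl

lemma pdv_sum {ι : Type*} (s : Finset ι) (F : ι → R3 → C8) (x : R3)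
    (hF : ∀ i ∈ s, ∀ m, DifferentiableAt ℝ (fun y => F i y m) x) (j : Fin 3) :
    pdv j (fun y => ∑ i ∈ s, F i y) x = ∑ i ∈ s, pdv j (F i) x := by
  funext m
  have h1 : (fun y => (∑ i ∈ s, F i y) m) = fun y => ∑ i ∈ s, F i y m := by
    funext y; simp
  simp only [pdv, h1]
  rw [pd_sum _ _ (fun i hi => hF i hi m)]
  rw [Finset.sum_apply]
  rfl

lemma diff_mulVec {M : R3 → Matrix (Fin 8) (Fin 8) ℂ} {U : R3 → C8} {x : R3}
    (hM : ∀ m l, DifferentiableAt ℝ (fun y => M y m l) x)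
    (hU : ∀ l, DifferentiableAt ℝ (fun y => U y l) x) (m : Fin 8) :
    DifferentiableAt ℝ (fun y => (M y).mulVec (U y) m) x := by
  have h1 : (fun y => (M y).mulVec (U y) m) = fun y => ∑ l : Fin 8, M y m l * U y l := rfl
  rw [h1]
  exact DifferentiableAt.fun_sum (fun l _ => (hM m l).mul (hU l))

lemma Pop_sub (F G : R3 → C8) (x : R3)
    (hF : ∀ m, DifferentiableAt ℝ (fun y => F y m) x)
    (hG : ∀ m, DifferentiableAt ℝ (fun y => G y m) x) :
    Pop (fun y => F y - G y) x = Pop F x - Pop G x := by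
  rw [Pop_symbolize F x, Pop_symbolize G x, Pop_symbolize (fun y => F y - G y) x]
  have h : ∀ j : Fin 3, pdv j (fun y => F y - G y) x = pdv j F x - pdv j G x := by
    intro j; funext m
    have h1 : (fun y => (F y - G y) m) = fun y => F y m - G y m := by funext y; simp
    simp only [pdv, h1, Pi.sub_apply]
    exact pd_sub (hF m) (hG m) j
  rw [← Finset.sum_sub_distrib]
  exact Finset.sum_congr rfl fun j _ => by rw [h j, Matrix.mulVec_sub]

end OPS
section HEART
open Complex

lemma mulVec_sumvec {ι : Type*} (s : Finset ι) (A : Matrix (Fin 8) (Fin 8) ℂ)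
    (v : ι → C8) : A.mulVec (∑ i ∈ s, v i) = ∑ i ∈ s, A.mulVec (v i) := by
  funext m
  simp [Matrix.mulVec, dotProduct, Finset.mul_sum, Finset.sum_apply]
  rw [Finset.sum_comm]

lemma pdWmatG (k : R3 → ℂ) (a b : R3 → C3) (x : R3) (j : Fin 3)
    (hk : DifferentiableAt ℝ k x)
    (ha : ∀ i, DifferentiableAt ℝ (fun y => a y i) x)
    (hb : ∀ i, DifferentiableAt ℝ (fun y => b y i) x) :
    (Matrix.of fun m l => pd j (fun y => WmatG (k y) (a y) (b y) m l) x)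
      = WmatG (pd j k x) (fun i => pd j (fun y => a y i) x)
          (fun i => pd j (fun y => b y i) x) := by
  funext m l
  fin_cases m <;> fin_cases l <;>
  · simp only [Matrix.of_apply, WmatG,
      mk8_0, mk8_1, mk8_2, mk8_3, mk8_4, mk8_5, mk8_6, mk8_7,
      v8_0, v8_1, v8_2, v8_3, v8_4, v8_5, v8_6, v8_7]
    all_goals first
    | exact pd_const 0 j x
    | rfl
    | exact pd_div_const (ha _) 2 j
    | exact pd_neg_div_const (ha _) 2 j
    | exact pd_div_const (hb _) 2 j
    | exact pd_neg_div_const (hb _) 2 j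

lemma diff_half {f : R3 → ℂ} {x : R3} (hf : DifferentiableAt ℝ f x) :
    DifferentiableAt ℝ (fun y => f y / 2) x := by
  simpa [div_eq_mul_inv, mul_comm] using hf.const_mul ((2:ℂ)⁻¹)

lemma WmatG_diff {k : R3 → ℂ} {a b : R3 → C3} {x : R3}
    (hk : DifferentiableAt ℝ k x)
    (ha : ∀ i, DifferentiableAt ℝ (fun y => a y i) x)
    (hb : ∀ i, DifferentiableAt ℝ (fun y => b y i) x) :
    ∀ m l, DifferentiableAt ℝ (fun y => WmatG (k y) (a y) (b y) m l) x := by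
  intro m l
  fin_cases m <;> fin_cases l <;>
  · simp only [WmatG, Matrix.of_apply,
      mk8_0, mk8_1, mk8_2, mk8_3, mk8_4, mk8_5, mk8_6, mk8_7,
      v8_0, v8_1, v8_2, v8_3, v8_4, v8_5, v8_6, v8_7]
    all_goals first
    | exact hk
    | exact differentiableAt_const _
    | exact diff_half (ha _)
    | exact diff_half ((ha _).neg)
    | exact diff_half (hb _)
    | exact diff_half ((hb _).neg)

/-- The zeroth order matrix `A = WP - PWᵗ`. -/
def AmatG (k : R3 → ℂ) (a b : R3 → C3) (x : R3) : Matrix (Fin 8) (Fin 8) ℂ :=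
  -∑ j : Fin 3, WmatG (pd j k x) (fun i => pd j (fun y => a y i) x)
      (fun i => pd j (fun y => b y i) x) * Psym (ee j)

/-- The commutator `W (P U) - P (Wᵗ U)` is zeroth order. -/
lemma commKey (k : R3 → ℂ) (a b : R3 → C3) (U : R3 → C8) (x : R3)
    (hk : DifferentiableAt ℝ k x)
    (ha : ∀ i, DifferentiableAt ℝ (fun y => a y i) x)
    (hb : ∀ i, DifferentiableAt ℝ (fun y => b y i) x)
    (hU : ∀ m, DifferentiableAt ℝ (fun y => U y m) x) :
    (WmatG (k x) (a x) (b x)).mulVec (Pop U x)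
      - Pop (fun y => (WmatG (k y) (b y) (a y)).mulVec (U y)) x
    = (AmatG k a b x).mulVec (U x) := by
  have hM := WmatG_diff hk hb ha
  rw [Pop_symbolize (fun y => (WmatG (k y) (b y) (a y)).mulVec (U y)) x]
  have step : ∀ j : Fin 3,
      pdv j (fun y => (WmatG (k y) (b y) (a y)).mulVec (U y)) x
        = (WmatG (pd j k x) (fun i => pd j (fun y => b y i) x)
            (fun i => pd j (fun y => a y i) x)).mulVec (U x)
          + (WmatG (k x) (b x) (a x)).mulVec (pdv j U x) := by
    intro j
    rw [pdv_mulVec _ _ _ hM hU j, pdWmatG k b a x j hk hb ha]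
  have expand : ∑ j : Fin 3, (Psym (ee j)).mulVec
        (pdv j (fun y => (WmatG (k y) (b y) (a y)).mulVec (U y)) x)
      = (∑ j : Fin 3, WmatG (pd j k x) (fun i => pd j (fun y => a y i) x)
            (fun i => pd j (fun y => b y i) x) * Psym (ee j)).mulVec (U x)
        + (WmatG (k x) (a x) (b x)).mulVec (Pop U x) := by
    rw [Pop_symbolize U x, mulVec_sumvec, sum_mulVec, ← Finset.sum_add_distrib]
    refine Finset.sum_congr rfl fun j _ => ?_
    rw [step j, Matrix.mulVec_add, Matrix.mulVec_mulVec, Matrix.mulVec_mulVec,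
      Matrix.mulVec_mulVec]
    simp only [← symbol_rel]
  rw [expand, AmatG, Matrix.neg_mulVec]
  abel

/-- `P ∘ P = -Δ`. -/
lemma Pop_Pop (U : R3 → C8) (hU : ContDiff ℝ 2 U) (x : R3) :
    Pop (fun y => Pop U y) x = -lap8 U x := by
  have hUm : ∀ m, ContDiffAt ℝ 2 (fun y => U y m) x := fun m => (contDiff_pi.mp hU m).contDiffAt
  have hpd : ∀ (kk : Fin 3) (l : Fin 8), DifferentiableAt ℝ (fun y => pd kk (fun z => U z l) y) x :=
    fun kk l => pd_diff (hUm l) kk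
  have hfun : (fun y => Pop U y) = fun y => ∑ kk : Fin 3, (Psym (ee kk)).mulVec (pdv kk U y) :=
    funext fun y => Pop_symbolize U y
  rw [hfun, Pop_symbolize _ x]
  have hstep : ∀ j : Fin 3,
      pdv j (fun y => ∑ kk : Fin 3, (Psym (ee kk)).mulVec (pdv kk U y)) x
        = ∑ kk : Fin 3, (Psym (ee kk)).mulVec (pdv j (fun y => pdv kk U y) x) := by
    intro j
    have hdiffs : ∀ kk ∈ (Finset.univ : Finset (Fin 3)), ∀ m : Fin 8,
        DifferentiableAt ℝ (fun y => (Psym (ee kk)).mulVec (pdv kk U y) m) x :=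
      fun kk _ m => diff_mulVec (M := fun _ => Psym (ee kk)) (U := fun y => pdv kk U y)
        (fun _ _ => differentiableAt_const _) (fun l => hpd kk l) m
    rw [pdv_sum Finset.univ (fun kk y => (Psym (ee kk)).mulVec (pdv kk U y)) x hdiffs j]
    exact Finset.sum_congr rfl fun kk _ =>
      pdv_mulVecConst _ _ _ (fun l => hpd kk l) j
  simp only [hstep]
  set H : Fin 3 → Fin 3 → C8 := fun j kk => pdv j (fun y => pdv kk U y) x with hH
  have hsymm : ∀ j kk, H j kk = H kk j := by
    intro j kk
    funext l
    exact pd_comm (hUm l) j kk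
  have hlap : lap8 U x = H 0 0 + H 1 1 + H 2 2 := by
    funext l
    simp only [lap8, lapC, Fin.sum_univ_three, Pi.add_apply]
    rfl
  calc ∑ j : Fin 3, (Psym (ee j)).mulVec (∑ kk : Fin 3, (Psym (ee kk)).mulVec (H j kk))
      = ∑ j : Fin 3, ∑ kk : Fin 3, (Psym (ee j) * Psym (ee kk)).mulVec (H j kk) := by
        refine Finset.sum_congr rfl fun j _ => ?_
        rw [mulVec_sumvec]
        exact Finset.sum_congr rfl fun kk _ => Matrix.mulVec_mulVec _ _ _
    _ = -lap8 U x := by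
        simp only [Fin.sum_univ_three]
        rw [hsymm 1 0, hsymm 2 0, hsymm 2 1,
          PP_anti 1 0 (by decide), PP_anti 2 0 (by decide), PP_anti 2 1 (by decide),
          PP_diag 0, PP_diag 1, PP_diag 2, hlap]
        simp only [Matrix.neg_mulVec, Matrix.one_mulVec]
        abel

end HEART

section FINAL
open Complex

lemma diff_conj {f : R3 → ℂ} {x : R3} (hf : DifferentiableAt ℝ f x) :
    DifferentiableAt ℝ (fun y => (starRingEnd ℂ) (f y)) x := by
  have h := Complex.conjCLE.differentiableAt.comp x hf
  exact h

lemma Dof_diff {f : R3 → ℂ} {x : R3} (hf : ContDiffAt ℝ 2 f x) (i : Fin 3) :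
    DifferentiableAt ℝ (fun y => Dof f y i) x := by
  have h : (fun y => Dof f y i) = fun y => -Complex.I * pd i f y := rfl
  rw [h]
  exact (pd_diff hf i).const_mul _

lemma Dof_conj_diff {f : R3 → ℂ} {x : R3} (hf : ContDiffAt ℝ 2 f x) (i : Fin 3) :
    DifferentiableAt ℝ (fun y => Dof (fun z => (starRingEnd ℂ) (f z)) y i) x := by
  have h1 : (fun y => Dof (fun z => (starRingEnd ℂ) (f z)) y i)
      = fun y => -Complex.I * (starRingEnd ℂ) (pd i f y) := by
    funext y
    show -Complex.I * pd i (fun z => (starRingEnd ℂ) (f z)) y = _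
    rw [pd_conj]
  rw [h1]
  exact (diff_conj (pd_diff hf i)).const_mul _

lemma Pop_comp_diff {U : R3 → C8} (hU : ContDiff ℝ 2 U) (x : R3) (m : Fin 8) :
    DifferentiableAt ℝ (fun y => Pop U y m) x := by
  have hrepr : (fun y => Pop U y m)
      = fun y => ∑ j : Fin 3, ∑ l : Fin 8, Psym (ee j) m l * pd j (fun z => U z l) y := by
    funext y
    rw [congrFun (Pop_symbolize U y) m, Finset.sum_apply]
    exact Finset.sum_congr rfl fun j _ => rfl
  rw [hrepr]
  exact DifferentiableAt.fun_sum fun j _ => DifferentiableAt.fun_sum fun l _ =>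
    (pd_diff (contDiff_pi.mp hU l).contDiffAt j).const_mul _

end FINAL



/-- `WP − PWᵗ`, `W*P − PW̄` and `W(−κ̄,ᾱ,β)P − PWᵗ(−κ̄,ᾱ,β)` are zeroth
order (multiplication by matrix-valued functions), and the corresponding second-order
factorizations `(P+W)(P−Wᵗ) = −ΔI₈ + Q`, `(P+W*)(P−W̄) = −ΔI₈ + Q̂`,
`(P+W(−κ̄,ᾱ,β))(P−Wᵗ(−κ̄,ᾱ,β)) = −ΔI₈ + Q̃` hold, with no first-order terms. -/
theorem zeroth_order_and_factorizations
    (Ω : Set R3) (hΩ : IsOpen Ω) (M ω : ℝ) (hω : 0 < ω)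
    (μ : R3 → ℝ) (γ : R3 → ℂ) (hadm : Admissible Ω M μ γ)
    (hμ2 : ContDiffOn ℝ 2 μ Ω) (hγ2 : ContDiffOn ℝ 2 γ Ω) :
    ∃ A Ahat Atil : R3 → Matrix (Fin 8) (Fin 8) ℂ,
      (∀ U : R3 → C8, ContDiff ℝ 2 U → ∀ x ∈ Ω,
        ((WmatC ω μ γ x).mulVec (Pop U x)
            - Pop (fun y => ((WmatC ω μ γ y).transpose).mulVec (U y)) x
          = (A x).mulVec (U x)) ∧
        (((WmatC ω μ γ x).conjTranspose).mulVec (Pop U x)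
            - Pop (fun y => ((WmatC ω μ γ y).map (starRingEnd ℂ)).mulVec (U y)) x
          = (Ahat x).mulVec (U x)) ∧
        ((WmatTil ω μ γ x).mulVec (Pop U x)
            - Pop (fun y => ((WmatTil ω μ γ y).transpose).mulVec (U y)) x
          = (Atil x).mulVec (U x))) ∧
      (∀ U : R3 → C8, ContDiff ℝ 2 U → ∀ x ∈ Ω,
        (Pop (fun y => Pop U y - ((WmatC ω μ γ y).transpose).mulVec (U y)) x
            + (WmatC ω μ γ x).mulVec (Pop U x - ((WmatC ω μ γ x).transpose).mulVec (U x))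
          = -lap8 U x + ((A x).mulVec (U x)
              - (WmatC ω μ γ x).mulVec (((WmatC ω μ γ x).transpose).mulVec (U x)))) ∧
        (Pop (fun y => Pop U y - ((WmatC ω μ γ y).map (starRingEnd ℂ)).mulVec (U y)) x
            + ((WmatC ω μ γ x).conjTranspose).mulVec
                (Pop U x - ((WmatC ω μ γ x).map (starRingEnd ℂ)).mulVec (U x))
          = -lap8 U x + ((Ahat x).mulVec (U x)
              - ((WmatC ω μ γ x).conjTranspose).mulVec
                  (((WmatC ω μ γ x).map (starRingEnd ℂ)).mulVec (U x)))) ∧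
        (Pop (fun y => Pop U y - ((WmatTil ω μ γ y).transpose).mulVec (U y)) x
            + (WmatTil ω μ γ x).mulVec (Pop U x - ((WmatTil ω μ γ x).transpose).mulVec (U x))
          = -lap8 U x + ((Atil x).mulVec (U x)
              - (WmatTil ω μ γ x).mulVec (((WmatTil ω μ γ x).transpose).mulVec (U x))))) := by
  classical
  set κf := kappaOf ω μ γ with hκf
  set αf := alphaOf γ with hαf
  set βf := betaOf μ with hβf
  -- pointwise differentiability facts
  have hM0 : (0:ℝ) < M⁻¹ := inv_pos.mpr hadm.hM
  have key : ∀ x ∈ Ω, DifferentiableAt ℝ κf x ∧ ContDiffAt ℝ 2 αf x ∧ ContDiffAt ℝ 2 βf x := by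
    intro x hx
    have hγx2 : ContDiffAt ℝ 2 γ x := hγ2.contDiffAt (hΩ.mem_nhds hx)
    have hμx2 : ContDiffAt ℝ 2 μ x := hμ2.contDiffAt (hΩ.mem_nhds hx)
    have hγre : (0:ℝ) < (γ x).re := lt_of_lt_of_le hM0 (hadm.lowγ x hx)
    have hγslit : γ x ∈ Complex.slitPlane := Or.inl hγre
    have hμpos : (0:ℝ) < μ x := lt_of_lt_of_le hM0 (hadm.lowμ x hx)
    refine ⟨?_, ?_, ?_⟩
    · -- κ differentiable
      have hsq : DifferentiableAt ℝ (fun y => Real.sqrt (μ y)) x :=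
        (((Real.contDiffAt_sqrt (n := 1) hμpos.ne').comp x
          (hμx2.of_le (by norm_num))).differentiableAt one_ne_zero)
      have hsqC : DifferentiableAt ℝ (fun y => ((Real.sqrt (μ y) : ℝ) : ℂ)) x := by
        have h := Complex.ofRealCLM.differentiableAt.comp x hsq
        exact h
      have hγd : DifferentiableAt ℝ γ x := hγx2.differentiableAt (by norm_num)
      have hcpow : DifferentiableAt ℝ (fun y => γ y ^ ((1:ℂ)/2)) x := by
        have hz : DifferentiableAt ℂ (fun z : ℂ => z ^ ((1:ℂ)/2)) (γ x) :=
          differentiableAt_id.cpow (differentiableAt_const _) hγslit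
        exact (hz.restrictScalars ℝ).comp x hγd
      exact ((hsqC.const_mul ((ω:ℂ))).mul hcpow)
    · -- α C²
      have hlog : ContDiffAt ℂ 2 Complex.log (γ x) := Complex.contDiffAt_log hγslit
      exact ((hlog.restrict_scalars ℝ).comp x hγx2)
    · -- β C²
      have hlog : ContDiffAt ℝ 2 Real.log (μ x) := (Real.contDiffAt_log.mpr hμpos.ne')
      have h2 : ContDiffAt ℝ 2 (fun y => Real.log (μ y)) x := hlog.comp x hμx2
      have h3 := Complex.ofRealCLM.contDiff.contDiffAt.comp x h2
      exact h3
  refine ⟨fun x => AmatG κf (fun y => Dof αf y) (fun y => Dof βf y) x,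
    fun x => AmatG (fun y => (starRingEnd ℂ) (κf y))
      (fun y => fun i => (starRingEnd ℂ) (Dof βf y i))
      (fun y => fun i => (starRingEnd ℂ) (Dof αf y i)) x,
    fun x => AmatG (fun y => -(starRingEnd ℂ) (κf y))
      (fun y => Dof (fun z => (starRingEnd ℂ) (αf z)) y) (fun y => Dof βf y) x,
    ?_, ?_⟩
  · intro U hU2 x hx
    obtain ⟨hκd, hα2, hβ2⟩ := key x hx
    have hUc : ∀ m, DifferentiableAt ℝ (fun y => U y m) x := fun m =>
      ((contDiff_pi.mp hU2 m).differentiable (by norm_num)).differentiableAt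
    have haD := Dof_diff hα2
    have hbD := Dof_diff hβ2
    refine ⟨?_, ?_, ?_⟩
    · simp only [WmatC_eq, WmatG_transpose]
      exact commKey κf (fun y => Dof αf y) (fun y => Dof βf y) U x hκd haD hbD hUc
    · simp only [WmatC_eq, WmatG_conjT, WmatG_map]
      exact commKey (fun y => (starRingEnd ℂ) (κf y))
        (fun y => fun i => (starRingEnd ℂ) (Dof βf y i))
        (fun y => fun i => (starRingEnd ℂ) (Dof αf y i)) U x
        (diff_conj hκd) (fun i => diff_conj (hbD i)) (fun i => diff_conj (haD i)) hUc
    · simp only [WmatTil_eq, WmatG_transpose]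
      exact commKey (fun y => -(starRingEnd ℂ) (κf y))
        (fun y => Dof (fun z => (starRingEnd ℂ) (αf z)) y) (fun y => Dof βf y) U x
        ((diff_conj hκd).neg) (Dof_conj_diff hα2) hbD hUc
  · intro U hU2 x hx
    obtain ⟨hκd, hα2, hβ2⟩ := key x hx
    have hUc : ∀ m, DifferentiableAt ℝ (fun y => U y m) x := fun m =>
      ((contDiff_pi.mp hU2 m).differentiable (by norm_num)).differentiableAt
    have haD := Dof_diff hα2
    have hbD := Dof_diff hβ2
    have hPc := Pop_comp_diff hU2 x
    refine ⟨?_, ?_, ?_⟩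
    · simp only [WmatC_eq, WmatG_transpose]
      have hcomm := commKey κf (fun y => Dof αf y) (fun y => Dof βf y) U x hκd haD hbD hUc
      have hWU : ∀ m, DifferentiableAt ℝ
          (fun y => (WmatG (κf y) (Dof βf y) (Dof αf y)).mulVec (U y) m) x :=
        diff_mulVec (WmatG_diff hκd hbD haD) hUc
      rw [Pop_sub _ _ x hPc hWU, Pop_Pop U hU2 x, Matrix.mulVec_sub, ← hcomm]
      abel
    · simp only [WmatC_eq, WmatG_conjT, WmatG_map]
      have hcomm := commKey (fun y => (starRingEnd ℂ) (κf y))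
        (fun y => fun i => (starRingEnd ℂ) (Dof βf y i))
        (fun y => fun i => (starRingEnd ℂ) (Dof αf y i)) U x
        (diff_conj hκd) (fun i => diff_conj (hbD i)) (fun i => diff_conj (haD i)) hUc
      have hWU : ∀ m, DifferentiableAt ℝ
          (fun y => (WmatG ((starRingEnd ℂ) (κf y)) (fun i => (starRingEnd ℂ) (Dof αf y i))
            (fun i => (starRingEnd ℂ) (Dof βf y i))).mulVec (U y) m) x :=
        diff_mulVec (WmatG_diff (diff_conj hκd) (fun i => diff_conj (haD i))
          (fun i => diff_conj (hbD i))) hUc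
      rw [Pop_sub _ _ x hPc hWU, Pop_Pop U hU2 x, Matrix.mulVec_sub, ← hcomm]
      abel
    · simp only [WmatTil_eq, WmatG_transpose]
      have hcomm := commKey (fun y => -(starRingEnd ℂ) (κf y))
        (fun y => Dof (fun z => (starRingEnd ℂ) (αf z)) y) (fun y => Dof βf y) U x
        ((diff_conj hκd).neg) (Dof_conj_diff hα2) hbD hUc
      have hWU : ∀ m, DifferentiableAt ℝ
          (fun y => (WmatG (-(starRingEnd ℂ) (κf y)) (Dof βf y)
            (Dof (fun z => (starRingEnd ℂ) (αf z)) y)).mulVec (U y) m) x :=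
        diff_mulVec (WmatG_diff ((diff_conj hκd).neg) hbD (Dof_conj_diff hα2)) hUc
      rw [Pop_sub _ _ x hPc hWU, Pop_Pop U hU2 x, Matrix.mulVec_sub, ← hcomm]
      abel

end
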